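/- Suppose every element of A has totally disconnected spectrum and φ : A → ℂ is continuous with φ(1) = 1 and φ(x)φ(y) ∈ σ(xy) for all x,y. Then for every invertible x ∈ A and every n ∈ ℕ, φ(xⁿ) = φ(x)ⁿ. -/

import Mathlib

open Complex Metric Set Real

noncomputable section
set_option maxHeartbeats 1000000

namespace Stmt6Aux

def HasWinding (γ : ℝ → ℂ) (w : ℂ) : Prop :=
  ∃ lam : ℝ → ℂ, ContinuousOn lam (Icc 0 1) ∧
    (∀ t ∈ Icc (0:ℝ) 1, Complex.exp (lam t) = γ t) ∧ lam 1 - lam 0 = w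

lemma hasWinding_unique {γ : ℝ → ℂ} {w w' : ℂ}
    (h : HasWinding γ w) (h' : HasWinding γ w') : w = w' := by
  obtain ⟨l, hl, hel, hw⟩ := h
  obtain ⟨m, hm, hem, hw'⟩ := h'
  have h01 : (0:ℝ) ∈ Icc (0:ℝ) 1 := by norm_num
  have h11 : (1:ℝ) ∈ Icc (0:ℝ) 1 := by norm_num
  have hmem : ∀ t ∈ Icc (0:ℝ) 1, ∃ n : ℤ, l t - m t = n * (2 * π * I) := by
    intro t ht
    rw [← Complex.exp_eq_one_iff, Complex.exp_sub, hel t ht, hem t ht, div_self]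
    rw [← hel t ht]; exact Complex.exp_ne_zero _
  have him : ∀ n : ℤ, ((n:ℂ) * (2 * π * I)).im = n * (2 * π) := by
    intro n; simp [Complex.mul_im]
  suffices hkey : l 1 - m 1 = l 0 - m 0 by
    have : w - w' = (l 1 - m 1) - (l 0 - m 0) := by rw [← hw, ← hw']; ring
    rw [hkey, sub_self] at this
    linear_combination this
  obtain ⟨n₀, h₀⟩ := hmem 0 h01
  obtain ⟨n₁, h₁⟩ := hmem 1 h11
  rcases eq_or_ne n₀ n₁ with hnn | hnn
  · rw [h₀, h₁, hnn]
  exfalso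
  set f : ℝ → ℝ := fun t => (l t - m t).im with hf
  have hfc : ContinuousOn f (Icc 0 1) := Complex.continuous_im.comp_continuousOn (hl.sub hm)
  have hf0 : f 0 = n₀ * (2 * π) := by rw [hf]; simp only; rw [h₀, him]
  have hf1 : f 1 = n₁ * (2 * π) := by rw [hf]; simp only; rw [h₁, him]
  have hπ : (0:ℝ) < π := Real.pi_pos
  have key : ∀ c : ℝ, c ∈ Icc (f 0) (f 1) ∪ Icc (f 1) (f 0) → ∃ t ∈ Icc (0:ℝ) 1, f t = c := by
    intro c hc
    rcases hc with hc | hc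
    · obtain ⟨t, ht, hft⟩ := intermediate_value_Icc zero_le_one hfc hc
      exact ⟨t, ht, hft⟩
    · obtain ⟨t, ht, hft⟩ := intermediate_value_Icc' zero_le_one hfc hc
      exact ⟨t, ht, hft⟩
  rcases hnn.lt_or_gt with hlt | hlt
  · have hcast : (n₀:ℝ) + 1 ≤ (n₁:ℝ) := by exact_mod_cast hlt
    obtain ⟨t, ht, hft⟩ := key ((2*n₀+1)*π) (by
      left
      constructor
      · rw [hf0]; nlinarith
      · rw [hf1]; nlinarith)
    obtain ⟨k, hk⟩ := hmem t ht
    have : f t = k * (2*π) := by rw [hf]; simp only; rw [hk, him]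
    rw [hft] at this
    have h2 : (2*(n₀:ℝ)+1) = k * 2 := by
      have := Real.pi_ne_zero
      have h3 : ((2*(n₀:ℝ)+1) - k*2) * π = 0 := by linarith
      rcases mul_eq_zero.mp h3 with h | h
      · linarith
      · exact absurd h Real.pi_ne_zero
    have : (2*n₀+1 : ℤ) = k * 2 := by exact_mod_cast h2
    omega
  · have hcast : (n₁:ℝ) + 1 ≤ (n₀:ℝ) := by exact_mod_cast hlt
    obtain ⟨t, ht, hft⟩ := key ((2*n₁+1)*π) (by
      right
      constructor
      · rw [hf1]; nlinarith
      · rw [hf0]; nlinarith)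
    obtain ⟨k, hk⟩ := hmem t ht
    have : f t = k * (2*π) := by rw [hf]; simp only; rw [hk, him]
    rw [hft] at this
    have h2 : (2*(n₁:ℝ)+1) = k * 2 := by
      have := Real.pi_ne_zero
      have h3 : ((2*(n₁:ℝ)+1) - k*2) * π = 0 := by linarith
      rcases mul_eq_zero.mp h3 with h | h
      · linarith
      · exact absurd h Real.pi_ne_zero
    have : (2*n₁+1 : ℤ) = k * 2 := by exact_mod_cast h2
    omega

lemma re_pos_of_close {u : ℂ} (h : ‖u - 1‖ < 1) : 0 < u.re := by
  have h1 : Complex.normSq (u - 1) < 1 := by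
    have h2 : ‖u-1‖^2 < 1 := by nlinarith [norm_nonneg (u-1)]
    rw [Complex.sq_norm] at h2
    exact h2
  rw [Complex.normSq_apply] at h1
  simp only [Complex.sub_re, Complex.sub_im, Complex.one_re, Complex.one_im] at h1
  nlinarith [sq_nonneg u.re, sq_nonneg u.im]

lemma hasWinding_transfer {γ₁ γ₂ : ℝ → ℂ} {w : ℂ}
    (h₁ : ContinuousOn γ₁ (Icc 0 1)) (h₂ : ContinuousOn γ₂ (Icc 0 1))
    (hcl : ∀ t ∈ Icc (0:ℝ) 1, ‖γ₂ t - γ₁ t‖ < ‖γ₁ t‖)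
    (he1 : γ₁ 0 = γ₁ 1) (he2 : γ₂ 0 = γ₂ 1)
    (hW : HasWinding γ₁ w) : HasWinding γ₂ w := by
  obtain ⟨l, hl, hel, hw⟩ := hW
  have hne1 : ∀ t ∈ Icc (0:ℝ) 1, γ₁ t ≠ 0 := by
    intro t ht h0
    have := hcl t ht
    rw [h0] at this; simp at this
    exact absurd this (not_lt.mpr (norm_nonneg _))
  have hne2 : ∀ t ∈ Icc (0:ℝ) 1, γ₂ t ≠ 0 := by
    intro t ht h0
    have := hcl t ht
    rw [h0] at this; simp at this
  have hre : ∀ t ∈ Icc (0:ℝ) 1, 0 < (γ₂ t / γ₁ t).re := by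
    intro t ht
    apply re_pos_of_close
    have hp : 0 < ‖γ₁ t‖ := norm_pos_iff.mpr (hne1 t ht)
    rw [div_sub_one (hne1 t ht), norm_div, div_lt_one hp]
    exact hcl t ht
  refine ⟨fun t => l t + Complex.log (γ₂ t / γ₁ t), ?_, ?_, ?_⟩
  · refine hl.add (ContinuousOn.clog (h₂.div h₁ hne1) ?_)
    intro t ht
    exact Or.inl (hre t ht)
  · intro t ht
    rw [Complex.exp_add, hel t ht, Complex.exp_log (div_ne_zero (hne2 t ht) (hne1 t ht)),
      mul_comm, div_mul_cancel₀ _ (hne1 t ht)]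
  · have h0 : (0:ℝ) ∈ Icc (0:ℝ) 1 := by norm_num
    have : γ₂ 1 / γ₁ 1 = γ₂ 0 / γ₁ 0 := by rw [he1, he2]
    simp only
    rw [this, ← hw]; ring

lemma hasWinding_homotopy {H : ℝ → ℝ → ℂ} {w : ℂ}
    (hH : ContinuousOn (fun p : ℝ × ℝ => H p.1 p.2) (Icc 0 1 ×ˢ Icc 0 1))
    (hne : ∀ s ∈ Icc (0:ℝ) 1, ∀ t ∈ Icc (0:ℝ) 1, H s t ≠ 0)
    (hloop : ∀ s ∈ Icc (0:ℝ) 1, H s 0 = H s 1)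
    (h0 : HasWinding (H 0) w) : HasWinding (H 1) w := by
  have hK : IsCompact (Icc (0:ℝ) 1 ×ˢ Icc (0:ℝ) 1) := isCompact_Icc.prod isCompact_Icc
  have h01 : (0:ℝ) ∈ Icc (0:ℝ) 1 := ⟨le_refl 0, zero_le_one⟩
  have hKne : (Icc (0:ℝ) 1 ×ˢ Icc (0:ℝ) 1).Nonempty :=
    ⟨(0,0), Set.mk_mem_prod h01 h01⟩
  obtain ⟨p₀, hp₀, hmin'⟩ := hK.exists_isMinOn hKne (hH.norm)
  have hmin := isMinOn_iff.mp hmin'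
  set m : ℝ := ‖H p₀.1 p₀.2‖ with hm
  have hmpos : 0 < m := norm_pos_iff.mpr (hne p₀.1 hp₀.1 p₀.2 hp₀.2)
  have huc := hK.uniformContinuousOn_of_continuous hH
  rw [Metric.uniformContinuousOn_iff] at huc
  obtain ⟨δ, hδ, hucd⟩ := huc m hmpos
  obtain ⟨n, hn⟩ := exists_nat_one_div_lt hδ
  have hstep : ∀ i : ℕ, i ≤ n + 1 → HasWinding (H ((i:ℝ) / ((n:ℝ)+1))) w := by
    intro i
    induction i with
    | zero =>
      intro _
      simpa using h0
    | succ i ih =>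
      intro hle
      have hi : i ≤ n + 1 := by omega
      have hs₁ : (i:ℝ)/((n:ℝ)+1) ∈ Icc (0:ℝ) 1 := by
        constructor
        · positivity
        · rw [div_le_one (by positivity)]; exact_mod_cast hi
      have hs₂ : ((i+1:ℕ):ℝ)/((n:ℝ)+1) ∈ Icc (0:ℝ) 1 := by
        constructor
        · positivity
        · rw [div_le_one (by positivity)]; exact_mod_cast hle
      have hcont : ∀ s ∈ Icc (0:ℝ) 1, ContinuousOn (H s) (Icc 0 1) := by
        intro s hs
        have : ContinuousOn (fun t : ℝ => (fun p : ℝ × ℝ => H p.1 p.2) (s, t)) (Icc 0 1) :=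
          hH.comp ((Continuous.prodMk_right s).continuousOn) (fun t ht => ⟨hs, ht⟩)
        exact this
      apply hasWinding_transfer (hcont _ hs₁) (hcont _ hs₂) ?_ (hloop _ hs₁) (hloop _ hs₂) (ih hi)
      intro t ht
      have hd : dist (((i+1:ℕ):ℝ)/((n:ℝ)+1), t) ((i:ℝ)/((n:ℝ)+1), t) < δ := by
        rw [Prod.dist_eq]
        simp only [dist_self]
        have : dist (((i+1:ℕ):ℝ)/((n:ℝ)+1)) ((i:ℝ)/((n:ℝ)+1)) = 1/((n:ℝ)+1) := by
          rw [Real.dist_eq, div_sub_div_same]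
          push_cast
          rw [add_sub_cancel_left, abs_of_pos (by positivity)]
        rw [max_eq_left (by rw [this]; positivity), this]
        exact hn
      have hlt := hucd ((((i+1:ℕ):ℝ)/((n:ℝ)+1), t)) (Set.mk_mem_prod hs₂ ht)
        (((i:ℝ)/((n:ℝ)+1), t)) (Set.mk_mem_prod hs₁ ht) hd
      have hb := hmin (((i:ℝ)/((n:ℝ)+1), t)) (Set.mk_mem_prod hs₁ ht)
      rw [dist_eq_norm] at hlt
      exact lt_of_lt_of_le hlt hb
  have := hstep (n+1) le_rfl
  have heq : ((n+1:ℕ):ℝ)/((n:ℝ)+1) = 1 := by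
    push_cast; rw [div_self]; positivity
  rwa [heq] at this

lemma hasWinding_const {c : ℂ} (hc : c ≠ 0) : HasWinding (fun _ => c) 0 :=
  ⟨fun _ => Complex.log c, continuousOn_const, fun t _ => Complex.exp_log hc, sub_self _⟩

lemma hasWinding_circle {R : ℝ} (hR : 0 < R) :
    HasWinding (fun t : ℝ => (R:ℂ) * Complex.exp (2 * π * t * Complex.I)) (2 * π * Complex.I) := by
  refine ⟨fun t => (Real.log R : ℂ) + 2 * π * t * Complex.I, ?_, ?_, ?_⟩
  · apply Continuous.continuousOn
    fun_prop
  · intro t _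
    rw [Complex.exp_add, ← Complex.ofReal_exp, Real.exp_log hR]
  · push_cast; ring

variable {X : Type*}

def disjointify : List (Set X) → List (Set X)
  | [] => []
  | s :: rest => s :: (disjointify rest).map (· \ s)

lemma disjointify_subset : ∀ (l : List (Set X)), ∀ Q ∈ disjointify l, ∃ P ∈ l, Q ⊆ P
  | [] => by simp [disjointify]
  | s :: rest => by
    intro Q hQ
    rcases List.mem_cons.mp hQ with rfl | hQ
    · exact ⟨Q, List.mem_cons_self, subset_rfl⟩
    · obtain ⟨Q', hQ', rfl⟩ := List.mem_map.mp hQ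
      obtain ⟨P, hP, hsub⟩ := disjointify_subset rest Q' hQ'
      exact ⟨P, List.mem_cons_of_mem _ hP, Set.diff_subset.trans hsub⟩

lemma disjointify_isClopen [TopologicalSpace X] : ∀ (l : List (Set X)),
    (∀ P ∈ l, IsClopen P) → ∀ Q ∈ disjointify l, IsClopen Q
  | [] => by simp [disjointify]
  | s :: rest => by
    intro hl Q hQ
    rcases List.mem_cons.mp hQ with rfl | hQ
    · exact hl _ (List.mem_cons_self)
    · obtain ⟨Q', hQ', rfl⟩ := List.mem_map.mp hQ
      have h1 := disjointify_isClopen rest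
        (fun P hP => hl P (List.mem_cons_of_mem _ hP)) Q' hQ'
      have h2 := hl s (List.mem_cons_self)
      rw [Set.diff_eq]
      exact h1.inter h2.compl

lemma disjointify_cover : ∀ (l : List (Set X)) (z : X),
    (∃ P ∈ l, z ∈ P) → ∃ Q ∈ disjointify l, z ∈ Q
  | [] => by simp
  | s :: rest => by
    intro z hz
    by_cases hzs : z ∈ s
    · exact ⟨s, List.mem_cons_self, hzs⟩
    · obtain ⟨P, hP, hzP⟩ := hz
      rcases List.mem_cons.mp hP with rfl | hP
      · exact absurd hzP hzs
      · obtain ⟨Q, hQ, hzQ⟩ := disjointify_cover rest z ⟨P, hP, hzP⟩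
        exact ⟨Q \ s, List.mem_cons_of_mem _ (List.mem_map_of_mem hQ), ⟨hzQ, hzs⟩⟩

lemma disjointify_pairwise : ∀ (l : List (Set X)), (disjointify l).Pairwise Disjoint
  | [] => List.Pairwise.nil
  | s :: rest => by
    refine List.Pairwise.cons ?_ ?_
    · intro Q hQ
      obtain ⟨Q', _, rfl⟩ := List.mem_map.mp hQ
      exact disjoint_sdiff_self_right
    · exact List.Pairwise.map _ (fun a b hab => hab.mono Set.diff_subset Set.diff_subset)
        (disjointify_pairwise rest)

def unionOf (l : List (Set X)) : Set X := l.foldr (· ∪ ·) ∅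

lemma mem_unionOf {l : List (Set X)} {z : X} : z ∈ unionOf l ↔ ∃ Q ∈ l, z ∈ Q := by
  induction l with
  | nil => simp [unionOf]
  | cons s rest ih =>
    show z ∈ s ∪ unionOf rest ↔ _
    simp [ih]

lemma isCompact_unionOf {Y : Type*} [TopologicalSpace Y] {l : List (Set Y)}
    (h : ∀ Q ∈ l, IsCompact Q) : IsCompact (unionOf l) := by
  induction l with
  | nil => exact isCompact_empty
  | cons s rest ih =>
    exact (h s (List.mem_cons_self)).union
      (ih (fun Q hQ => h Q (List.mem_cons_of_mem _ hQ)))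

lemma glue (a : ℂ) (d : ℝ) (hd : 0 < d) :
    ∀ l : List (Set ℂ), l.Pairwise Disjoint →
      (∀ Q ∈ l, IsCompact Q ∧ ∃ c : ℂ, d ≤ dist c a ∧ Q ⊆ ball c (d/2)) →
      ∃ L : ℂ → ℂ, Continuous L ∧ ∀ z ∈ unionOf l, Complex.exp (L z) = z - a := by
  intro l
  induction l with
  | nil =>
    intro _ _
    exact ⟨fun _ => 0, continuous_const, by intro z hz; simp [unionOf] at hz⟩
  | cons P rest ih =>
    intro hpw hprop
    obtain ⟨L₀, hL₀c, hL₀⟩ := ih (List.Pairwise.of_cons hpw)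
      (fun Q hQ => hprop Q (List.mem_cons_of_mem _ hQ))
    have hmemPrest : ∀ z ∈ unionOf (P :: rest), z ∈ P ∨ z ∈ unionOf rest := by
      intro z hz
      rcases mem_unionOf.mp hz with ⟨Q, hQ, hzQ⟩
      rcases List.mem_cons.mp hQ with rfl | hQ
      · exact Or.inl hzQ
      · exact Or.inr (mem_unionOf.mpr ⟨Q, hQ, hzQ⟩)
    rcases eq_empty_or_nonempty P with rfl | hPne
    · refine ⟨L₀, hL₀c, ?_⟩
      intro z hz
      rcases hmemPrest z hz with h | h
      · exact absurd h (Set.notMem_empty z)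
      · exact hL₀ z h
    obtain ⟨hPc, c, hca, hPball⟩ := hprop P (List.mem_cons_self)
    have hTc : IsCompact (unionOf rest) :=
      isCompact_unionOf (fun Q hQ => (hprop Q (List.mem_cons_of_mem _ hQ)).1)
    have hPT : Disjoint P (unionOf rest) := by
      rw [Set.disjoint_left]
      intro z hzP hzT
      rcases mem_unionOf.mp hzT with ⟨Q, hQ, hzQ⟩
      have hdisj : Disjoint P Q := (List.pairwise_cons.mp hpw).1 Q hQ
      exact Set.disjoint_left.mp hdisj hzP hzQ
    obtain ⟨δ₀, hδ₀, hthick⟩ := hPT.exists_thickenings hPc hTc.isClosed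
    set δ : ℝ := min δ₀ (d/4) with hδdef
    have hδpos : 0 < δ := lt_min hδ₀ (by linarith)
    have hδd : δ ≤ d/4 := min_le_right _ _
    have hTdist : ∀ z ∈ unionOf rest, δ ≤ infDist z P := by
      intro z hz
      by_contra hlt
      push_neg at hlt
      have h1 : z ∈ thickening δ₀ P := by
        rw [mem_thickening_iff_infDist_lt hPne]
        exact lt_of_lt_of_le hlt (min_le_left _ _)
      have h2 : z ∈ thickening δ₀ (unionOf rest) := self_subset_thickening hδ₀ _ hz
      exact Set.disjoint_left.mp hthick h1 h2
    have hw0 : c - a ≠ 0 := by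
      rw [sub_ne_zero]
      intro h
      rw [h] at hca
      simp at hca
      linarith
    set w : ℂ := c - a with hwdef
    have hwnorm : d ≤ ‖w‖ := by rwa [← dist_eq_norm]
    set ℓ : ℂ → ℂ := fun z => Complex.log ((z - a)/w) + Complex.log w with hℓdef
    set χ : ℂ → ℝ := fun z => max 0 (1 - 2 * infDist z P / δ) with hχdef
    have hχcont : Continuous χ :=
      continuous_const.max
        (continuous_const.sub ((continuous_const.mul (continuous_infDist_pt P)).div_const δ))
    have hχ1 : ∀ z ∈ P, χ z = 1 := by
      intro z hz
      simp [hχdef, Metric.infDist_zero_of_mem hz]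
    have hχ0 : ∀ z : ℂ, δ/2 ≤ infDist z P → χ z = 0 := by
      intro z hz
      have h1 : 1 - 2 * infDist z P / δ ≤ 0 := by
        rw [sub_nonpos, le_div_iff₀ hδpos]
        linarith
      simp [hχdef, max_eq_left h1]
    have hslit : ∀ z : ℂ, infDist z P < δ → 0 < ((z - a)/w).re := by
      intro z hz
      obtain ⟨p, hp, hdzp⟩ := (Metric.infDist_lt_iff hPne).mp hz
      have hpc : dist p c < d/2 := mem_ball.mp (hPball hp)
      have hzc : dist z c < 3*d/4 := by
        calc dist z c ≤ dist z p + dist p c := dist_triangle _ _ _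
          _ < δ + d/2 := by linarith
          _ ≤ 3*d/4 := by linarith
      apply re_pos_of_close
      rw [div_sub_one hw0, norm_div, div_lt_one (lt_of_lt_of_le hd hwnorm)]
      have : z - a - w = z - c := by rw [hwdef]; ring
      rw [this, ← dist_eq_norm]
      calc dist z c < 3*d/4 := hzc
        _ < ‖w‖ := by linarith
    set L : ℂ → ℂ := fun z => (χ z : ℂ) * ℓ z + (1 - (χ z : ℂ)) * L₀ z with hLdef
    have hterm2 : Continuous fun z => (1 - (χ z : ℂ)) * L₀ z := by
      apply Continuous.mul _ hL₀c
      exact continuous_const.sub (Complex.continuous_ofReal.comp hχcont)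
    have hterm1 : ∀ z₀ : ℂ, ContinuousAt (fun z => (χ z : ℂ) * ℓ z) z₀ := by
      intro z₀
      rcases lt_or_ge (infDist z₀ P) δ with hlt | hge
      · have hℓat : ContinuousAt ℓ z₀ := by
          apply ContinuousAt.add _ continuousAt_const
          apply ContinuousAt.clog
          · fun_prop
          · exact Or.inl (hslit z₀ hlt)
        exact ((Complex.continuous_ofReal.comp hχcont).continuousAt).mul hℓat
      · have hge' : δ/2 < infDist z₀ P := lt_of_lt_of_le (by linarith) hge
        have hO : IsOpen {z : ℂ | δ/2 < infDist z P} :=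
          isOpen_lt continuous_const (continuous_infDist_pt P)
        have hEq : (fun z => (χ z : ℂ) * ℓ z) =ᶠ[nhds z₀] fun _ => 0 := by
          filter_upwards [hO.mem_nhds hge'] with z hz
          rw [hχ0 z (le_of_lt hz)]
          simp
        exact (continuousAt_congr hEq).mpr continuousAt_const
    have hLc : Continuous L := by
      rw [continuous_iff_continuousAt]
      intro z₀
      exact (hterm1 z₀).add hterm2.continuousAt
    refine ⟨L, hLc, ?_⟩
    intro z hz
    rcases hmemPrest z hz with hzP | hzT
    · have hza : z - a ≠ 0 := by
        rw [sub_ne_zero]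
        intro h
        have h1 : dist c a ≤ dist c z + dist z a := dist_triangle _ _ _
        have h2 : dist c z < d/2 := by rw [dist_comm]; exact mem_ball.mp (hPball hzP)
        have h3 : dist z a = 0 := by rw [h, dist_self]
        linarith
      have hLz : L z = ℓ z := by
        rw [hLdef]
        simp only
        rw [hχ1 z hzP]
        push_cast
        ring
      rw [hLz, hℓdef]
      simp only
      rw [Complex.exp_add, Complex.exp_log (div_ne_zero hza hw0), Complex.exp_log hw0,
        div_mul_cancel₀ _ hw0]
    · have hLz : L z = L₀ z := by
        rw [hLdef]
        simp only
        rw [hχ0 z (le_trans (by linarith) (hTdist z hzT))]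
        push_cast
        ring
      rw [hLz]
      exact hL₀ z hzT



/-- A continuous logarithm of `z - a` on a compact totally disconnected set avoiding `a`. -/
lemma exists_log_on {S : Set ℂ} (hS : IsCompact S) (htd : IsTotallyDisconnected S)
    {a : ℂ} (ha : a ∉ S) :
    ∃ L : ℂ → ℂ, Continuous L ∧ ∀ z ∈ S, Complex.exp (L z) = z - a := by
  rcases eq_empty_or_nonempty S with rfl | hSne
  · exact ⟨fun _ => 0, continuous_const, by simp⟩
  set d : ℝ := infDist a S with hddef
  have hd : 0 < d := (hS.isClosed.notMem_iff_infDist_pos hSne).mp ha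
  -- work in the subtype
  haveI : CompactSpace S := isCompact_iff_compactSpace.mp hS
  haveI : TotallyDisconnectedSpace S := totallyDisconnectedSpace_subtype_iff.mpr htd
  have hcl : ∀ x : S, ∃ V : Set S, IsClopen V ∧ x ∈ V ∧
      V ⊆ Subtype.val ⁻¹' (ball (x : ℂ) (d/2)) := by
    intro x
    apply compact_exists_isClopen_in_isOpen
    · exact isOpen_ball.preimage continuous_subtype_val
    · simp only [Set.mem_preimage]
      exact mem_ball_self (by linarith)
  choose V hVclopen hVmem hVsub using hcl
  obtain ⟨t, ht⟩ := isCompact_univ.elim_finite_subcover V (fun x => (hVclopen x).2)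
    (by intro x _; exact Set.mem_iUnion.mpr ⟨x, hVmem x⟩)
  set lX : List (Set S) := disjointify (t.toList.map V) with hlX
  have hallclopen : ∀ P ∈ t.toList.map V, IsClopen P := by
    intro P hP
    obtain ⟨x, _, rfl⟩ := List.mem_map.mp hP
    exact hVclopen x
  set l : List (Set ℂ) := lX.map (fun Q => Subtype.val '' Q) with hl
  have hlpw : l.Pairwise Disjoint := by
    apply List.Pairwise.map _ _ (disjointify_pairwise _)
    intro p q hpq
    exact (Set.disjoint_image_iff Subtype.coe_injective).mpr hpq
  have hlprop : ∀ Q ∈ l, IsCompact Q ∧ ∃ c : ℂ, d ≤ dist c a ∧ Q ⊆ ball c (d/2) := by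
    intro Q hQ
    obtain ⟨Q', hQ', rfl⟩ := List.mem_map.mp hQ
    constructor
    · have hcl' : IsClopen Q' := disjointify_isClopen _ hallclopen Q' hQ'
      exact (hcl'.1.isCompact).image continuous_subtype_val
    · obtain ⟨P, hP, hsub⟩ := disjointify_subset _ Q' hQ'
      obtain ⟨x, _, rfl⟩ := List.mem_map.mp hP
      refine ⟨(x : ℂ), ?_, ?_⟩
      · rw [dist_comm]
        exact Metric.infDist_le_dist_of_mem x.2
      · intro z hz
        obtain ⟨z', hz', rfl⟩ := hz
        exact hVsub x (hsub hz')
  obtain ⟨L, hLc, hL⟩ := glue a d hd l hlpw hlprop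
  refine ⟨L, hLc, ?_⟩
  intro z hz
  apply hL
  rw [mem_unionOf]
  have hzmem : (⟨z, hz⟩ : S) ∈ ⋃ x ∈ t, V x := ht (Set.mem_univ _)
  rw [Set.mem_iUnion₂] at hzmem
  obtain ⟨x, hx, hzx⟩ := hzmem
  obtain ⟨Q, hQ, hzQ⟩ := disjointify_cover (t.toList.map V) ⟨z, hz⟩
    ⟨V x, List.mem_map_of_mem (f := V) (Finset.mem_toList.mpr hx), hzx⟩
  exact ⟨Subtype.val '' Q, List.mem_map_of_mem hQ, Set.mem_image_of_mem _ hzQ⟩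

lemma norm_exp_2pi (t : ℝ) : ‖Complex.exp (2 * π * (t:ℂ) * Complex.I)‖ = 1 := by
  rw [Complex.norm_exp]
  have h : (2 * (π:ℂ) * (t:ℂ) * Complex.I).re = 0 := by
    simp [Complex.mul_re, Complex.mul_im]
  rw [h, Real.exp_zero]

lemma exp_2pi_loop : Complex.exp (2 * π * ((0:ℝ):ℂ) * Complex.I) =
    Complex.exp (2 * π * ((1:ℝ):ℂ) * Complex.I) := by
  push_cast
  rw [mul_zero, zero_mul, Complex.exp_zero, mul_one, Complex.exp_two_pi_mul_I]

/-- The connected component of `a` in the complement of a compact totally disconnected set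
is unbounded. -/
lemma comp_unbounded {S : Set ℂ} (hS : IsCompact S) (htd : IsTotallyDisconnected S)
    {a : ℂ} (ha : a ∉ S) (R : ℝ) :
    ∃ z ∈ connectedComponentIn Sᶜ a, R ≤ ‖z‖ := by
  classical
  by_contra hcon
  push_neg at hcon
  set U : Set ℂ := connectedComponentIn Sᶜ a with hUdef
  have hSc : IsClosed S := hS.isClosed
  have haU : a ∈ U := mem_connectedComponentIn ha
  have hUopen : IsOpen U := (hSc.isOpen_compl).connectedComponentIn
  obtain ⟨r₀, hr₀⟩ := hS.isBounded.subset_closedBall 0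
  set R' : ℝ := max R (max ‖a‖ r₀) + 1 with hR'def
  have hRR' : R < R' := by
    have : R ≤ max R (max ‖a‖ r₀) := le_max_left _ _
    linarith
  have haR' : ‖a‖ < R' := by
    have : ‖a‖ ≤ max R (max ‖a‖ r₀) := le_trans (le_max_left _ _) (le_max_right _ _)
    linarith
  have hr₀R' : r₀ < R' := by
    have : r₀ ≤ max R (max ‖a‖ r₀) := le_trans (le_max_right _ _) (le_max_right _ _)
    linarith
  have hR'pos : 0 < R' := lt_of_le_of_lt (norm_nonneg a) haR'
  have hUball : ∀ z ∈ U, ‖z‖ < R' := fun z hz => lt_trans (hcon z hz) hRR'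
  have hfrU : frontier U ⊆ S := by
    intro z hz
    by_contra hzS
    have hzcl : z ∈ closure U := hz.1
    have hzU : z ∉ U := by
      intro h
      exact hz.2 (by rwa [hUopen.interior_eq])
    have hins : IsPreconnected (insert z U) := by
      apply IsPreconnected.subset_closure (isPreconnected_connectedComponentIn)
        (Set.subset_insert _ _)
      intro y hy
      rcases hy with rfl | hy
      · exact hzcl
      · exact subset_closure hy
    have hsub : insert z U ⊆ Sᶜ := by
      intro y hy
      rcases hy with rfl | hy
      · exact hzS
      · exact connectedComponentIn_subset _ _ hy
    have := hins.subset_connectedComponentIn (Set.mem_insert_iff.mpr (Or.inr haU)) hsub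
    exact hzU (this (Set.mem_insert _ _))
  obtain ⟨L, hLc, hL⟩ := exists_log_on hS htd ha
  set M : ℂ → ℂ := fun z => if z ∈ closure U then a + Complex.exp (L z) else z with hMdef
  have hMc : Continuous M := by
    apply Continuous.if
    · intro z hz
      have h1 : frontier {x : ℂ | x ∈ closure U} ⊆ frontier U := by
        rw [Set.setOf_mem_eq]
        calc frontier (closure U) ⊆ closure (closure U) \ interior U :=
              Set.diff_subset_diff_right (interior_mono subset_closure)
          _ = frontier U := by rw [closure_closure]; rfl
      have hzS : z ∈ S := hfrU (h1 hz)
      rw [hL z hzS]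
      ring
    · exact continuous_const.add (Complex.continuous_exp.comp hLc)
    · exact continuous_id
  have hMa : ∀ z, M z ≠ a := by
    intro z
    rw [hMdef]
    simp only
    split_ifs with h
    · intro heq
      exact Complex.exp_ne_zero (L z) (by linear_combination heq)
    · intro heq
      rw [heq] at h
      exact h (subset_closure haU)
  have hclU : ∀ z : ℂ, ‖z‖ = R' → z ∉ closure U := by
    intro z hzn hzcl
    by_cases hzU : z ∈ U
    · have := hUball z hzU
      rw [hzn] at this
      exact lt_irrefl _ this
    · have hzfr : z ∈ frontier U := ⟨hzcl, by rwa [hUopen.interior_eq]⟩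
      have h2 := hr₀ (hfrU hzfr)
      rw [mem_closedBall_zero_iff, hzn] at h2
      linarith
  have hMid : ∀ z : ℂ, ‖z‖ = R' → M z = z := by
    intro z hzn
    rw [hMdef]
    simp only
    rw [if_neg (hclU z hzn)]
  set E : ℝ → ℂ := fun t => Complex.exp (2 * π * (t:ℂ) * Complex.I) with hEdef
  have hEc : Continuous E := by
    apply Complex.continuous_exp.comp
    fun_prop
  have hEloop : E 0 = E 1 := exp_2pi_loop
  have hEnorm : ∀ t : ℝ, ‖(R':ℂ) * E t‖ = R' := by
    intro t
    rw [norm_mul, hEdef]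
    simp only
    rw [norm_exp_2pi, mul_one, Complex.norm_real, Real.norm_eq_abs,
      _root_.abs_of_pos hR'pos]
  -- first homotopy : from constant loop at M a - a to the loop M(R' e^{2πit}) - a
  set H₁ : ℝ → ℝ → ℂ := fun s t => M ((1 - (s:ℂ)) * a + (s:ℂ) * ((R':ℂ) * E t)) - a with hH₁def
  have hH₁cont : ContinuousOn (fun p : ℝ × ℝ => H₁ p.1 p.2) (Icc 0 1 ×ˢ Icc 0 1) := by
    apply Continuous.continuousOn
    apply Continuous.sub _ continuous_const
    apply hMc.comp
    apply Continuous.add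
    · exact (continuous_const.sub (Complex.continuous_ofReal.comp continuous_fst)).mul
        continuous_const
    · exact (Complex.continuous_ofReal.comp continuous_fst).mul
        (continuous_const.mul (hEc.comp continuous_snd))
  have hH₁ne : ∀ s ∈ Icc (0:ℝ) 1, ∀ t ∈ Icc (0:ℝ) 1, H₁ s t ≠ 0 := by
    intro s _ t _
    exact sub_ne_zero.mpr (hMa _)
  have hH₁loop : ∀ s ∈ Icc (0:ℝ) 1, H₁ s 0 = H₁ s 1 := by
    intro s _
    rw [hH₁def]
    simp only
    rw [hEloop]
  have hH₁0 : H₁ 0 = fun _ => M a - a := by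
    funext t
    rw [hH₁def]
    push_cast
    simp
  have hW1 : HasWinding (H₁ 1) 0 := by
    apply hasWinding_homotopy hH₁cont hH₁ne hH₁loop
    rw [hH₁0]
    exact hasWinding_const (sub_ne_zero.mpr (hMa a))
  have hH₁1 : H₁ 1 = fun t => (R':ℂ) * E t - a := by
    funext t
    rw [hH₁def]
    push_cast
    simp only [sub_self, zero_mul, one_mul, zero_add]
    rw [hMid _ (hEnorm t)]
  -- second homotopy : remove the `- a`
  set H₂ : ℝ → ℝ → ℂ := fun s t => (R':ℂ) * E t - (1 - (s:ℂ)) * a with hH₂def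
  have hH₂cont : ContinuousOn (fun p : ℝ × ℝ => H₂ p.1 p.2) (Icc 0 1 ×ˢ Icc 0 1) := by
    apply Continuous.continuousOn
    apply Continuous.sub
    · exact continuous_const.mul (hEc.comp continuous_snd)
    · exact (continuous_const.sub (Complex.continuous_ofReal.comp continuous_fst)).mul
        continuous_const
  have hH₂ne : ∀ s ∈ Icc (0:ℝ) 1, ∀ t ∈ Icc (0:ℝ) 1, H₂ s t ≠ 0 := by
    intro s hs t _
    rw [hH₂def]
    simp only
    intro heq
    rw [sub_eq_zero] at heq
    have h1 : ‖(R':ℂ) * E t‖ = R' := hEnorm t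
    have h2 : ‖(1 - (s:ℂ)) * a‖ ≤ ‖a‖ := by
      rw [norm_mul]
      have h3 : ‖(1:ℂ) - (s:ℂ)‖ ≤ 1 := by
        have h4 : (1:ℂ) - (s:ℂ) = ((1 - s : ℝ) : ℂ) := by push_cast; ring
        rw [h4, Complex.norm_real, Real.norm_eq_abs,
          _root_.abs_of_nonneg (by linarith [hs.2] : (0:ℝ) ≤ 1 - s)]
        linarith [hs.1]
      nlinarith [norm_nonneg a]
    have h5 : R' ≤ ‖a‖ := by rw [← h1, heq]; exact h2
    linarith
  have hH₂0 : H₂ 0 = H₁ 1 := by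
    rw [hH₁1]
    funext t
    rw [hH₂def]
    push_cast
    simp
  have hH₂1 : H₂ 1 = fun t => (R':ℂ) * E t := by
    funext t
    rw [hH₂def]
    push_cast
    simp
  have hW2 : HasWinding (H₂ 1) 0 := by
    apply hasWinding_homotopy hH₂cont hH₂ne
    · intro s _
      rw [hH₂def]
      simp only
      rw [hEloop]
    · rw [hH₂0]; exact hW1
  rw [hH₂1] at hW2
  have hWc : HasWinding (fun t : ℝ => (R':ℂ) * Complex.exp (2 * π * t * Complex.I))
      (2 * π * Complex.I) := hasWinding_circle hR'pos
  have : (0:ℂ) = 2 * π * Complex.I := hasWinding_unique hW2 hWc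
  have hne : (2 * (π:ℂ) * Complex.I) ≠ 0 := by
    simp [Real.pi_ne_zero, Complex.I_ne_zero, Complex.ofReal_ne_zero]
  exact hne this.symm

lemma joinedIn_outer {r : ℝ} (hr : 0 ≤ r) {z₁ z₂ : ℂ}
    (h₁ : r < ‖z₁‖) (h₂ : r < ‖z₂‖) :
    JoinedIn {z : ℂ | r < ‖z‖} z₁ z₂ := by
  have habs : ∀ (u : ℝ) (θ : ℝ), ‖((u:ℂ)) * Complex.exp ((θ:ℂ) * Complex.I)‖ = |u| := by
    intro u θ
    rw [norm_mul, Complex.norm_exp_ofReal_mul_I, mul_one,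
      Complex.norm_real, Real.norm_eq_abs]
  refine ⟨⟨⟨fun t => ((((1 - (t:ℝ)) * ‖z₁‖ + (t:ℝ) * ‖z₂‖ : ℝ)) : ℂ) *
      Complex.exp ((((1 - (t:ℝ)) * Complex.arg z₁ + (t:ℝ) * Complex.arg z₂ : ℝ) : ℂ)
        * Complex.I), ?_⟩, ?_, ?_⟩, ?_⟩
  · apply Continuous.mul
    · apply Complex.continuous_ofReal.comp
      fun_prop
    · apply Complex.continuous_exp.comp
      apply Continuous.mul _ continuous_const
      apply Complex.continuous_ofReal.comp
      fun_prop
  · simp only [Set.Icc.coe_zero, sub_zero, one_mul, zero_mul, add_zero]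
    exact Complex.norm_mul_exp_arg_mul_I z₁
  · simp only [Set.Icc.coe_one, sub_self, zero_mul, one_mul, zero_add]
    exact Complex.norm_mul_exp_arg_mul_I z₂
  · intro t
    simp only [Set.mem_setOf_eq]
    rw [Path.coe_mk_mk]
    rw [habs]
    have ht0 : (0:ℝ) ≤ (t:ℝ) := t.2.1
    have ht1 : (t:ℝ) ≤ 1 := t.2.2
    have hgt : r < (1 - (t:ℝ)) * ‖z₁‖ + (t:ℝ) * ‖z₂‖ := by
      rcases eq_or_lt_of_le ht1 with hcase | hcase
      · rw [hcase]
        simpa using h₂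
      · have e1 : (1 - (t:ℝ)) * r < (1 - (t:ℝ)) * ‖z₁‖ :=
          mul_lt_mul_of_pos_left h₁ (by linarith)
        have e2 : (t:ℝ) * r ≤ (t:ℝ) * ‖z₂‖ := mul_le_mul_of_nonneg_left h₂.le ht0
        nlinarith
    rw [_root_.abs_of_pos (lt_of_le_of_lt hr hgt)]
    exact hgt

theorem joinedIn_compl {S : Set ℂ} (hS : IsCompact S) (htd : IsTotallyDisconnected S)
    {a b : ℂ} (ha : a ∉ S) (hb : b ∉ S) : JoinedIn Sᶜ a b := by
  obtain ⟨r₀', hr₀'⟩ := hS.isBounded.subset_closedBall 0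
  set r₀ : ℝ := max r₀' 0 with hr₀def
  have hr₀0 : 0 ≤ r₀ := le_max_right _ _
  have hSr : S ⊆ closedBall 0 r₀ := hr₀'.trans (closedBall_subset_closedBall (le_max_left _ _))
  have houter : {z : ℂ | r₀ < ‖z‖} ⊆ Sᶜ := by
    intro z hz hzS
    have h1 := hSr hzS
    rw [mem_closedBall_zero_iff] at h1
    exact absurd h1 (not_le.mpr hz)
  obtain ⟨z₁, hz₁U, hz₁n⟩ := comp_unbounded hS htd ha (r₀ + 1)
  obtain ⟨z₂, hz₂U, hz₂n⟩ := comp_unbounded hS htd hb (r₀ + 1)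
  have hUo : IsOpen (connectedComponentIn Sᶜ a) := hS.isClosed.isOpen_compl.connectedComponentIn
  have hVo : IsOpen (connectedComponentIn Sᶜ b) := hS.isClosed.isOpen_compl.connectedComponentIn
  have hja : JoinedIn (connectedComponentIn Sᶜ a) a z₁ := by
    have hconn : IsConnected (connectedComponentIn Sᶜ a) :=
      isConnected_connectedComponentIn_iff.mpr ha
    exact ((hUo.isConnected_iff_isPathConnected).mp hconn).joinedIn a
      (mem_connectedComponentIn ha) z₁ hz₁U
  have hjb : JoinedIn (connectedComponentIn Sᶜ b) b z₂ := by
    have hconn : IsConnected (connectedComponentIn Sᶜ b) :=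
      isConnected_connectedComponentIn_iff.mpr hb
    exact ((hVo.isConnected_iff_isPathConnected).mp hconn).joinedIn b
      (mem_connectedComponentIn hb) z₂ hz₂U
  have hmid : JoinedIn {z : ℂ | r₀ < ‖z‖} z₁ z₂ :=
    joinedIn_outer hr₀0 (by linarith) (by linarith)
  exact ((hja.mono (connectedComponentIn_subset _ _)).trans (hmid.mono houter)).trans
    (hjb.mono (connectedComponentIn_subset _ _)).symm

end Stmt6Aux

end

open Stmt6Aux


variable {A : Type*} [NormedRing A] [NormedAlgebra ℂ A] [CompleteSpace A]

theorem stmt_6 (htd : ∀ x : A, IsTotallyDisconnected (spectrum ℂ x))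
    (φ : A → ℂ) (hc : Continuous φ)
    (hone : φ 1 = 1)
    (hmul : ∀ x y : A, φ x * φ y ∈ spectrum ℂ (x * y)) :
    ∀ x : A, IsUnit x → ∀ n : ℕ, φ (x ^ n) = (φ x) ^ n := by
  intro x hx
  set bc : ℂ := ((‖x‖ * ‖(1:A)‖ + 1 : ℝ) : ℂ) with hbcdef
  have hbcval : (0:ℝ) ≤ ‖x‖ * ‖(1:A)‖ := mul_nonneg (norm_nonneg _) (norm_nonneg _)
  have hbcnorm : ‖bc‖ = ‖x‖ * ‖(1:A)‖ + 1 := by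
    rw [hbcdef, Complex.norm_real, Real.norm_eq_abs, _root_.abs_of_pos (by linarith)]
  have hbc0 : bc ≠ 0 := by
    intro h
    rw [h] at hbcnorm
    simp at hbcnorm
    linarith
  have hbx : ∀ y : A, ‖y‖ ≤ ‖x‖ → bc ∉ spectrum ℂ y := by
    intro y hy hmem
    have h1 := spectrum.norm_le_norm_mul_of_mem hmem
    rw [hbcnorm] at h1
    have h2 : ‖y‖ * ‖(1:A)‖ ≤ ‖x‖ * ‖(1:A)‖ := mul_le_mul_of_nonneg_right hy (norm_nonneg _)
    linarith
  have hUnit : ∀ (y : A) (t : ℂ), t ∉ spectrum ℂ y → IsUnit (y - algebraMap ℂ A t) := by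
    intro y t ht
    rw [spectrum.notMem_iff] at ht
    rw [← neg_sub]
    exact ht.neg
  have J1 : JoinedIn {y : A | IsUnit y} x (x - algebraMap ℂ A bc) := by
    have h0 : (0:ℂ) ∉ spectrum ℂ x := spectrum.zero_notMem_iff ℂ |>.mpr hx
    have hbcs : bc ∉ spectrum ℂ x := hbx x le_rfl
    obtain ⟨γ, hγ⟩ := joinedIn_compl (spectrum.isCompact x) (htd x) h0 hbcs
    have hfc : Continuous fun μ : ℂ => x - algebraMap ℂ A μ :=
      continuous_const.sub (continuous_algebraMap ℂ A)
    have hJ : JoinedIn {y : A | IsUnit y} (x - algebraMap ℂ A 0) (x - algebraMap ℂ A bc) := by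
      refine ⟨γ.map hfc, fun t => ?_⟩
      simp only [Path.map_coe, Function.comp_apply, Set.mem_setOf_eq]
      exact hUnit x (γ t) (hγ t)
    simpa using hJ
  have J2 : JoinedIn {y : A | IsUnit y} (x - algebraMap ℂ A bc) (-(algebraMap ℂ A bc)) := by
    refine ⟨⟨⟨fun t => (1 - (t:ℝ)) • x - algebraMap ℂ A bc, ?_⟩, ?_, ?_⟩, fun t => ?_⟩
    · apply Continuous.sub _ continuous_const
      exact (continuous_const.sub continuous_subtype_val).smul continuous_const
    · simp
    · simp
    · simp only [Set.mem_setOf_eq]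
      apply hUnit
      apply hbx
      rw [norm_smul, Real.norm_eq_abs]
      have ht0 : (0:ℝ) ≤ (t:ℝ) := t.2.1
      have ht1 : (t:ℝ) ≤ 1 := t.2.2
      rw [_root_.abs_of_nonneg (by linarith)]
      nlinarith [norm_nonneg x]
  have J3 : JoinedIn {y : A | IsUnit y} (-(algebraMap ℂ A bc)) 1 := by
    obtain ⟨γ, hγ⟩ := joinedIn_compl isCompact_singleton isTotallyDisconnected_singleton
      (show -bc ∉ ({0} : Set ℂ) from by simp [hbc0]) (show (1:ℂ) ∉ ({0} : Set ℂ) from by simp)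
    have hJ : JoinedIn {y : A | IsUnit y} (algebraMap ℂ A (-bc)) (algebraMap ℂ A 1) := by
      refine ⟨γ.map (continuous_algebraMap ℂ A), fun t => ?_⟩
      simp only [Path.map_coe, Function.comp_apply, Set.mem_setOf_eq]
      have hne : γ t ≠ 0 := hγ t
      exact (isUnit_iff_ne_zero.mpr hne).map (algebraMap ℂ A)
    simpa [map_neg, map_one] using hJ
  have hjoin : JoinedIn {y : A | IsUnit y} 1 x := ((J1.trans J2).trans J3).symm
  obtain ⟨γ, hγ⟩ := hjoin
  intro n
  induction n with
  | zero => simp [hone]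
  | succ n ih =>
    have key : φ (x ^ (n+1)) = φ x * φ (x ^ n) := by
      set q : unitInterval → ℂ :=
        fun t => φ (γ t) * φ (Ring.inverse (γ t) * x ^ (n+1)) with hq
      have hinvc : Continuous fun t : unitInterval => Ring.inverse (γ t) := by
        rw [continuous_iff_continuousAt]
        intro t
        have hu : IsUnit (γ t) := hγ t
        have h2 := NormedRing.inverse_continuousAt hu.unit
        rw [IsUnit.unit_spec] at h2
        exact h2.comp γ.continuous.continuousAt
      have hqc : Continuous q :=
        (hc.comp γ.continuous).mul (hc.comp (hinvc.mul continuous_const))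
      have hqmem : ∀ t, q t ∈ spectrum ℂ (x ^ (n+1)) := by
        intro t
        have hu : IsUnit (γ t) := hγ t
        have h1 := hmul (γ t) (Ring.inverse (γ t) * x ^ (n+1))
        rwa [← mul_assoc, Ring.mul_inverse_cancel _ hu, one_mul] at h1
      have hsub : Set.range q ⊆ spectrum ℂ (x ^ (n+1)) := by
        rintro _ ⟨t, rfl⟩
        exact hqmem t
      have hpre : IsPreconnected (Set.range q) := isPreconnected_range hqc
      have hss := htd (x ^ (n+1)) (Set.range q) hsub hpre
      have heq : q 0 = q 1 := hss (Set.mem_range_self 0) (Set.mem_range_self 1)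
      have hq0 : q 0 = φ (x ^ (n+1)) := by
        rw [hq]
        simp only [γ.source]
        rw [Ring.inverse_one, one_mul, hone, one_mul]
      have hq1 : q 1 = φ x * φ (x ^ n) := by
        rw [hq]
        simp only [γ.target]
        rw [pow_succ', ← mul_assoc, Ring.inverse_mul_cancel _ hx, one_mul]
      rw [← hq0, heq, hq1]
    rw [key, ih, pow_succ']
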